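/- For a univariate predictor: if X ~ N(0, σ²_X) and Y | X ~ Bernoulli(Φ(γ₀ + γX)), then the population simple-regression slope Cov(X,Y)/Var(X) equals γ·φ(0; γ₀, 1 + γ²σ²_X). Consequently, the slope is zero if and only if γ = 0. -/

import Mathlib

open MeasureTheory Real

noncomputable def stdPhi (x : ℝ) : ℝ := (Real.sqrt (2 * Real.pi))⁻¹ * Real.exp (-(x ^ 2) / 2)

noncomputable def stdPhiCDF (t : ℝ) : ℝ := ∫ u in Set.Iic t, stdPhi u

/-- Density at `t` of a normal distribution with mean `μ` and variance `v`. -/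
noncomputable def normalPDF (t μ v : ℝ) : ℝ :=
  (Real.sqrt (2 * Real.pi * v))⁻¹ * Real.exp (-((t - μ) ^ 2) / (2 * v))

open Filter Set Topology

lemma stdPhi_cont : Continuous stdPhi := by
  unfold stdPhi; fun_prop

lemma stdPhi_nonneg (x : ℝ) : 0 ≤ stdPhi x := by
  unfold stdPhi; positivity

lemma stdPhi_integrable : Integrable stdPhi := by
  have h : Integrable (fun x : ℝ => Real.exp (-(1/2 : ℝ) * x ^ 2)) :=
    integrable_exp_neg_mul_sq (by norm_num)
  have := h.const_mul (Real.sqrt (2 * Real.pi))⁻¹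
  refine this.congr (Filter.Eventually.of_forall fun x => ?_)
  unfold stdPhi; ring_nf

lemma stdPhiCDF_nonneg (t : ℝ) : 0 ≤ stdPhiCDF t :=
  setIntegral_nonneg measurableSet_Iic fun x _ => stdPhi_nonneg x

lemma stdPhiCDF_le (t : ℝ) : stdPhiCDF t ≤ ∫ x, stdPhi x :=
  setIntegral_le_integral stdPhi_integrable
    (Filter.Eventually.of_forall fun x => stdPhi_nonneg x)

lemma stdPhi_totalMass_nonneg : 0 ≤ ∫ x, stdPhi x :=
  integral_nonneg fun x => stdPhi_nonneg x

lemma hasDerivAt_stdPhiCDF (t : ℝ) : HasDerivAt stdPhiCDF (stdPhi t) t := by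
  have heq : stdPhiCDF = fun u => stdPhiCDF 0 + ∫ x in (0:ℝ)..u, stdPhi x := by
    funext u
    have := intervalIntegral.integral_Iic_sub_Iic (stdPhi_integrable.integrableOn (s := Iic 0))
      (stdPhi_integrable.integrableOn (s := Iic u)) (μ := volume) (a := 0) (b := u)
    simp only [stdPhiCDF]
    linarith [this]
  rw [heq]
  have hd := intervalIntegral.integral_hasDerivAt_right (a := 0) (f := stdPhi) (b := t)
    stdPhi_integrable.intervalIntegrable (stdPhi_cont.stronglyMeasurableAtFilter _ _)
    stdPhi_cont.continuousAt
  simpa using hd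

lemma stdPhiCDF_cont : Continuous stdPhiCDF :=
  continuous_iff_continuousAt.2 fun t => (hasDerivAt_stdPhiCDF t).continuousAt

lemma normalPDF_nonneg (x μ v : ℝ) : 0 ≤ normalPDF x μ v := by
  unfold normalPDF; positivity

lemma normalPDF_cont (b : ℝ) : Continuous fun x => normalPDF x 0 b := by
  unfold normalPDF; fun_prop

lemma normalPDF_eq (b x : ℝ) :
    normalPDF x 0 b = (Real.sqrt (2 * Real.pi * b))⁻¹ * Real.exp (-(1/(2*b)) * x ^ 2) := by
  unfold normalPDF
  rcases eq_or_ne b 0 with h | h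
  · simp [h]
  · rw [show -((x - 0) ^ 2) / (2 * b) = -(1/(2*b)) * x ^ 2 by
      rw [sub_zero]; field_simp]

lemma normalPDF_integrable (b : ℝ) (hb : 0 < b) :
    Integrable fun x => normalPDF x 0 b := by
  have h := (integrable_exp_neg_mul_sq (b := 1/(2*b)) (by positivity)).const_mul
    (Real.sqrt (2 * Real.pi * b))⁻¹
  exact h.congr (Filter.Eventually.of_forall fun x => (normalPDF_eq b x).symm)

lemma normalPDF_mul_integrable (b : ℝ) (hb : 0 < b) :
    Integrable fun x => x * normalPDF x 0 b := by
  have h := (integrable_mul_exp_neg_mul_sq (b := 1/(2*b)) (by positivity)).const_mul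
    (Real.sqrt (2 * Real.pi * b))⁻¹
  refine h.congr (Filter.Eventually.of_forall fun x => ?_)
  simp only [normalPDF_eq b]; ring

lemma hasDerivAt_normalPDF (b : ℝ) (hb : 0 < b) (x : ℝ) :
    HasDerivAt (fun x => normalPDF x 0 b) (-(x/b) * normalPDF x 0 b) x := by
  have hg : HasDerivAt (fun x : ℝ => -(1/(2*b)) * x ^ 2) (-(x/b)) x := by
    have := (hasDerivAt_pow 2 x).const_mul (-(1/(2*b)))
    refine this.congr_deriv ?_
    field_simp
    ring
  have := (hg.exp).const_mul (Real.sqrt (2 * Real.pi * b))⁻¹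
  have heq : (fun x => normalPDF x 0 b)
      = fun x => (Real.sqrt (2 * Real.pi * b))⁻¹ * Real.exp (-(1/(2*b)) * x ^ 2) := by
    funext y; exact normalPDF_eq b y
  rw [heq, normalPDF_eq]
  refine this.congr_deriv ?_
  ring

lemma normalPDF_tendsto (b : ℝ) (hb : 0 < b) (l : Filter ℝ)
    (hl : Tendsto (fun x : ℝ => x ^ 2) l atTop) :
    Tendsto (fun x => normalPDF x 0 b) l (𝓝 0) := by
  have h1 : Tendsto (fun x : ℝ => -(1/(2*b)) * x ^ 2) l atBot :=
    Filter.Tendsto.neg_mul_atTop (C := -(1/(2*b))) (neg_neg_iff_pos.mpr (by positivity)) tendsto_const_nhds hl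
  have h2 : Tendsto (fun x : ℝ => Real.exp (-(1/(2*b)) * x ^ 2)) l (𝓝 0) :=
    Real.tendsto_exp_atBot.comp h1
  have h3 := h2.const_mul (Real.sqrt (2 * Real.pi * b))⁻¹
  rw [mul_zero] at h3
  exact h3.congr fun x => (normalPDF_eq b x).symm

lemma sq_tendsto_atTop : Tendsto (fun x : ℝ => x ^ 2) atTop atTop :=
  tendsto_pow_atTop (by norm_num : (2:ℕ) ≠ 0)

lemma sq_tendsto_atBot : Tendsto (fun x : ℝ => x ^ 2) atBot atTop := by
  have h := (tendsto_pow_atTop (n := 2) (by norm_num : (2:ℕ) ≠ 0)).comp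
    (tendsto_neg_atBot_atTop (G := ℝ))
  exact h.congr fun x => by simp [Function.comp, neg_sq]

/-- Integration by parts identity. -/
lemma ibp (b : ℝ) (hb : 0 < b) (γ0 γ : ℝ) :
    (∫ x : ℝ, x * stdPhiCDF (γ0 + γ * x) * normalPDF x 0 b)
      = b * γ * ∫ x : ℝ, stdPhi (γ0 + γ * x) * normalPDF x 0 b := by
  set M := ∫ x, stdPhi x with hM
  have hMnn : 0 ≤ M := stdPhi_totalMass_nonneg
  set f : ℝ → ℝ := fun x => normalPDF x 0 b with hf
  set G : ℝ → ℝ := fun x => -(b * f x * stdPhiCDF (γ0 + γ * x)) with hG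
  have hΦ' : ∀ x : ℝ, HasDerivAt (fun x => stdPhiCDF (γ0 + γ * x))
      (γ * stdPhi (γ0 + γ * x)) x := by
    intro x
    have hin : HasDerivAt (fun x : ℝ => γ0 + γ * x) γ x := by
      simpa using ((hasDerivAt_id x).const_mul γ).const_add γ0
    have := (hasDerivAt_stdPhiCDF (γ0 + γ * x)).comp x hin
    exact this.congr_deriv (mul_comm _ _)
  have hG' : ∀ x : ℝ, HasDerivAt G
      (x * stdPhiCDF (γ0 + γ * x) * f x - b * γ * (stdPhi (γ0 + γ * x) * f x)) x := by
    intro x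
    have h1 := ((hasDerivAt_normalPDF b hb x).const_mul b).mul (hΦ' x)
    have h2 := h1.neg
    have hb' : b ≠ 0 := hb.ne'
    have heq : x * stdPhiCDF (γ0 + γ * x) * f x - b * γ * (stdPhi (γ0 + γ * x) * f x)
        = -(b * (-(x/b) * f x) * stdPhiCDF (γ0 + γ * x)
            + b * f x * (γ * stdPhi (γ0 + γ * x))) := by
      field_simp
      ring
    rw [heq]
    exact h2
  have hA : Integrable fun x : ℝ => x * stdPhiCDF (γ0 + γ * x) * f x := by
    have hg : Integrable fun x : ℝ => M * (x * f x) :=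
      (normalPDF_mul_integrable b hb).const_mul M
    refine hg.mono ?_ (Filter.Eventually.of_forall fun x => ?_)
    · exact ((continuous_id.mul (stdPhiCDF_cont.comp (by fun_prop))).mul
        (normalPDF_cont b)).aestronglyMeasurable
    · simp only [norm_mul, Real.norm_eq_abs]
      have h1 : |stdPhiCDF (γ0 + γ * x)| ≤ M := by
        rw [abs_of_nonneg (stdPhiCDF_nonneg _)]; exact stdPhiCDF_le _
      calc |x| * |stdPhiCDF (γ0 + γ * x)| * |f x| ≤ |x| * M * |f x| := by
              gcongr
        _ ≤ |M| * (|x| * |f x|) := by rw [abs_of_nonneg hMnn]; ring_nf; exact le_rfl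
  have hB : Integrable fun x : ℝ => stdPhi (γ0 + γ * x) * f x := by
    have hg : Integrable fun x : ℝ => (Real.sqrt (2 * Real.pi))⁻¹ * f x :=
      (normalPDF_integrable b hb).const_mul _
    refine hg.mono ?_ (Filter.Eventually.of_forall fun x => ?_)
    · exact ((stdPhi_cont.comp (by fun_prop)).mul (normalPDF_cont b)).aestronglyMeasurable
    · simp only [norm_mul, Real.norm_eq_abs]
      have hs : stdPhi (γ0 + γ * x) ≤ (Real.sqrt (2 * Real.pi))⁻¹ := by
        have he : Real.exp (-((γ0 + γ * x) ^ 2) / 2) ≤ 1 := by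
          rw [Real.exp_le_one_iff]
          nlinarith [sq_nonneg (γ0 + γ * x)]
        calc stdPhi (γ0 + γ * x)
            ≤ (Real.sqrt (2 * Real.pi))⁻¹ * 1 :=
              mul_le_mul_of_nonneg_left he (by positivity)
          _ = (Real.sqrt (2 * Real.pi))⁻¹ := mul_one _
      have h1 : |stdPhi (γ0 + γ * x)| ≤ |(Real.sqrt (2 * Real.pi))⁻¹| := by
        rw [abs_of_nonneg (stdPhi_nonneg _),
          abs_of_nonneg (by positivity : (0:ℝ) ≤ (Real.sqrt (2 * Real.pi))⁻¹)]
        exact hs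
      exact mul_le_mul_of_nonneg_right h1 (abs_nonneg _)
  have hBc : Integrable fun x : ℝ => b * γ * (stdPhi (γ0 + γ * x) * f x) :=
    hB.const_mul _
  have hG'int : Integrable fun x : ℝ =>
      x * stdPhiCDF (γ0 + γ * x) * f x - b * γ * (stdPhi (γ0 + γ * x) * f x) :=
    hA.sub hBc
  -- limits of G at ±∞ are 0
  have hGlim : ∀ l : Filter ℝ, Tendsto (fun x : ℝ => x ^ 2) l atTop →
      Tendsto G l (𝓝 0) := by
    intro l hl
    have hfl := normalPDF_tendsto b hb l hl
    have hlow : Tendsto (fun x : ℝ => -(b * M) * f x) l (𝓝 0) := by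
      have := hfl.const_mul (-(b * M)); simpa using this
    refine tendsto_of_tendsto_of_tendsto_of_le_of_le hlow tendsto_const_nhds
      (fun x => ?_) (fun x => ?_)
    · simp only [hG]
      have h1 : stdPhiCDF (γ0 + γ * x) ≤ M := stdPhiCDF_le _
      have h2 : 0 ≤ f x := normalPDF_nonneg _ _ _
      have h4 := mul_le_mul_of_nonneg_left h1 (mul_nonneg hb.le h2)
      nlinarith [h4]
    · simp only [hG]
      have h2 : 0 ≤ f x := normalPDF_nonneg _ _ _
      have h3 : 0 ≤ stdPhiCDF (γ0 + γ * x) := stdPhiCDF_nonneg _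
      have h4 := mul_nonneg (mul_nonneg hb.le h2) h3
      linarith
  have key := integral_of_hasDerivAt_of_tendsto hG' hG'int
    (hGlim atBot sq_tendsto_atBot) (hGlim atTop sq_tendsto_atTop)
  rw [sub_zero, integral_sub hA hBc, integral_const_mul] at key
  linarith [key]

/-- Gaussian product integral. -/
lemma gint (b : ℝ) (hb : 0 < b) (γ0 γ : ℝ) :
    (∫ x : ℝ, stdPhi (γ0 + γ * x) * normalPDF x 0 b)
      = normalPDF 0 γ0 (1 + γ ^ 2 * b) := by
  set v : ℝ := 1 + γ ^ 2 * b with hv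
  have hvpos : 0 < v := by positivity
  set m : ℝ := γ0 * γ * b / v with hm
  set K : ℝ := (Real.sqrt (2 * Real.pi))⁻¹ * (Real.sqrt (2 * Real.pi * b))⁻¹ *
    Real.exp (-(γ0 ^ 2) / (2 * v)) with hK
  have hpt : ∀ x : ℝ, stdPhi (γ0 + γ * x) * normalPDF x 0 b
      = K * Real.exp (-(v/(2*b)) * (x + m) ^ 2) := by
    intro x
    have hexp : -((γ0 + γ * x) ^ 2) / 2 + -((x - 0) ^ 2) / (2 * b)
        = -(γ0 ^ 2) / (2 * v) + -(v / (2 * b)) * (x + m) ^ 2 := by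
      rw [hm, hv]; field_simp; ring
    unfold stdPhi normalPDF
    rw [hK, mul_mul_mul_comm, ← Real.exp_add, hexp, Real.exp_add]
    ring
  have hint : (∫ x : ℝ, stdPhi (γ0 + γ * x) * normalPDF x 0 b)
      = K * Real.sqrt (Real.pi / (v/(2*b))) := by
    rw [integral_congr_ae (Filter.Eventually.of_forall hpt), integral_const_mul]
    congr 1
    have := integral_add_right_eq_self (μ := volume)
      (fun x : ℝ => Real.exp (-(v/(2*b)) * x ^ 2)) m
    rw [this, integral_gaussian]
  rw [hint]
  have harg : Real.pi / (v/(2*b)) = (2 * Real.pi * b) / v := by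
    field_simp
  rw [harg, Real.sqrt_div (by positivity) v]
  unfold normalPDF
  rw [hK]
  have h1 : Real.sqrt (2 * Real.pi * v) = Real.sqrt (2 * Real.pi) * Real.sqrt v := by
    rw [← Real.sqrt_mul (by positivity)]
  have h2 : (0:ℝ) < Real.sqrt (2 * Real.pi * b) := Real.sqrt_pos.2 (by positivity)
  have h3 : (0:ℝ) < Real.sqrt (2 * Real.pi) := Real.sqrt_pos.2 (by positivity)
  have h4 : (0:ℝ) < Real.sqrt v := Real.sqrt_pos.2 hvpos
  rw [h1]
  rw [show ((0:ℝ) - γ0) ^ 2 = γ0 ^ 2 by ring]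
  field_simp

/-- Univariate probit case: the population simple-regression slope
    Cov(X,Y)/Var(X) = E(XY)/σ²_X equals γ·φ(0; γ₀, 1 + γ²σ²_X), which is zero iff γ = 0. -/
theorem stmt14 (σX2 : ℝ) (hσ : 0 < σX2) (γ0 γ : ℝ) :
    (∫ x : ℝ, x * stdPhiCDF (γ0 + γ * x) * normalPDF x 0 σX2) / σX2 =
        γ * normalPDF 0 γ0 (1 + γ ^ 2 * σX2) ∧
      ((∫ x : ℝ, x * stdPhiCDF (γ0 + γ * x) * normalPDF x 0 σX2) / σX2 = 0 ↔ γ = 0) := by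
  have hmain : (∫ x : ℝ, x * stdPhiCDF (γ0 + γ * x) * normalPDF x 0 σX2) / σX2 =
      γ * normalPDF 0 γ0 (1 + γ ^ 2 * σX2) := by
    rw [ibp σX2 hσ γ0 γ, gint σX2 hσ γ0 γ]
    field_simp
  refine ⟨hmain, ?_⟩
  rw [hmain]
  have hN : 0 < normalPDF 0 γ0 (1 + γ ^ 2 * σX2) := by
    unfold normalPDF
    have : (0:ℝ) < 1 + γ ^ 2 * σX2 := by positivity
    have h3 : (0:ℝ) < Real.sqrt (2 * Real.pi * (1 + γ ^ 2 * σX2)) :=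
      Real.sqrt_pos.2 (by positivity)
    positivity
  constructor
  · intro h
    rcases mul_eq_zero.1 h with h | h
    · exact h
    · exact absurd h hN.ne'
  · intro h; rw [h]; ring
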